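/- Let B, C be base hierarchies with C a good successor of B, n ∈ ℕ, b ∈ B, and c ∈ C with c ≥ ↑b. Then: (1) b divides n if and only if c divides ⌈b→c⌉(n); (2) if n =_b b^e a + r is the b-decomposition, then the b-decomposition of ⌈b→c⌉(n) in base c is c^(⌈b→c⌉(e)) · ↑a + ⌈b→c⌉(r). -/

import Mathlib

/-- `n =_b b^e·a + r` is the `b`-decomposition of `n`. -/
def BDecomp (b n e a r : ℕ) : Prop :=
  n = b ^ e * a + r ∧ b ^ e ≤ n ∧ n < b ^ (e + 1) ∧ 0 < a ∧ a < b ∧ r < b ^ e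

/-- `c = S_B(b)`, the successor of `b` in `B` (when it exists). -/
def SuccIn (B : Set ℕ) (b c : ℕ) : Prop := IsLeast {x | x ∈ B ∧ b < x} c

/-- A base hierarchy: a nonempty set of naturals `≥ 2` in which every element
divides its successor (`b ∣ S_B(b)`; vacuous when `S_B(b) = ∞`). -/
def IsBaseHierarchy (B : Set ℕ) : Prop :=
  B.Nonempty ∧ (∀ b ∈ B, 2 ≤ b) ∧ ∀ b ∈ B, ∀ c, SuccIn B b c → b ∣ c

/-- `b = base_B(n)`: the largest element of `B` that is `≤ n`, or `min B` if
`n < min B`. -/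
def IsBaseOf (B : Set ℕ) (n b : ℕ) : Prop :=
  ((∃ x ∈ B, x ≤ n) ∧ IsGreatest {x | x ∈ B ∧ x ≤ n} b) ∨
  ((∀ x ∈ B, n < x) ∧ IsLeast B b)

/-- `n` is `B`-critical if `base_B(n) ∣ n`. -/
def Critical (B : Set ℕ) (n : ℕ) : Prop := ∃ b, IsBaseOf B n b ∧ b ∣ n

/-- if `C` is a good successor of `B`, `b ∈ B`, `c ∈ C` with
`c ≥ ↑b`, then (1) `b ∣ n ↔ c ∣ ⌈b→c⌉(n)`, and (2) if `n =_b b^e·a + r`, then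
the `c`-decomposition of `⌈b→c⌉(n)` is `c^(⌈b→c⌉ e)·(↑a) + ⌈b→c⌉ r`. -/
theorem stmt13 (B C : Set ℕ) (hB : IsBaseHierarchy B) (hC : IsBaseHierarchy C)
    (up : ℕ → ℕ) (chg : ℕ → ℕ → ℕ → ℕ)
    (hup_small : ∀ n, (∀ x ∈ B, n < x) → up n = n)
    (hchg_small : ∀ b c m, m < b → chg b c m = up m)
    (hchg_big : ∀ b c m e a r, b ≤ m → BDecomp b m e a r →
      chg b c m = c ^ chg b c e * up a + chg b c r)
    (hup_big : ∀ n b, (∃ x ∈ B, x ≤ n) → IsBaseOf B n b →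
      ∃ c, IsLeast {c' | c' ∈ C ∧ up (n - 1) < chg b c' n ∧
          ∀ d, SuccIn C c' d → chg b c' n < d} c ∧ up n = chg b c n)
    (hmin : ∀ mB mC, IsLeast B mB → IsLeast C mC → mB ≤ mC)
    (hgood : ∀ b ∈ B, (∀ mB, IsLeast B mB → mB < b) →
      ∀ e d k, IsBaseOf C (up (b - 1)) e → SuccIn C (up (b - 1)) d →
        up (b - 1) < k → k < d → ¬ e ∣ k)
    (n b c : ℕ) (hb : b ∈ B) (hc : c ∈ C) (hcb : up b ≤ c) :
    ((b ∣ n) ↔ c ∣ chg b c n) ∧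
    (∀ e a r, BDecomp b n e a r →
      BDecomp c (chg b c n) (chg b c e) (up a) (chg b c r)) := by
  obtain ⟨hBne, hB2, _⟩ := hB
  obtain ⟨_, hC2, _⟩ := hC
  have hb2 : 2 ≤ b := hB2 b hb
  have hc2 : 2 ≤ c := hC2 c hc
  have hb1 : 1 < b := hb2
  -- `up 0 = 0`
  have hup0 : up 0 = 0 := hup_small 0 (fun x hx => lt_of_lt_of_le two_pos (hB2 x hx))
  -- `up` is strictly monotone
  have hupsucc : ∀ k, up k < up (k + 1) := by
    intro k
    by_cases h : ∀ x ∈ B, k + 1 < x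
    · rw [hup_small k (fun x hx => lt_trans (Nat.lt_succ_self k) (h x hx)),
        hup_small (k + 1) h]
      exact Nat.lt_succ_self k
    · push_neg at h
      obtain ⟨x, hxB, hxle⟩ := h
      have hsub : {y | y ∈ B ∧ y ≤ k + 1} ⊆ Set.Iic (k + 1) := fun y hy => hy.2
      have hfin : {y | y ∈ B ∧ y ≤ k + 1}.Finite := (Set.finite_Iic (k + 1)).subset hsub
      have hne : {y | y ∈ B ∧ y ≤ k + 1}.Nonempty := ⟨x, hxB, hxle⟩
      have hmem : sSup {y | y ∈ B ∧ y ≤ k + 1} ∈ {y | y ∈ B ∧ y ≤ k + 1} :=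
        hne.csSup_mem hfin
      have hgr : IsGreatest {y | y ∈ B ∧ y ≤ k + 1} (sSup {y | y ∈ B ∧ y ≤ k + 1}) :=
        ⟨hmem, fun y hy => le_csSup hfin.bddAbove hy⟩
      obtain ⟨c', hc', heq⟩ := hup_big (k + 1) _ ⟨x, hxB, hxle⟩ (Or.inl ⟨⟨x, hxB, hxle⟩, hgr⟩)
      rw [heq]
      have h2 := hc'.1.2.1
      simpa using h2
  have hupmono : StrictMono up := strictMono_nat_of_lt_succ hupsucc
  have huppos : ∀ a : ℕ, 0 < a → 0 < up a := by
    intro a ha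
    have := hupmono ha
    rwa [hup0] at this
  have hupltc : ∀ m : ℕ, m < b → up m < c := fun m hm => lt_of_lt_of_le (hupmono hm) hcb
  -- `chg b c 0 = 0`
  have hchg0 : chg b c 0 = 0 := by
    rw [hchg_small b c 0 (lt_of_lt_of_le two_pos hb2), hup0]
  -- existence of decompositions
  have hdecomp_ex : ∀ m, b ≤ m → ∃ e a r, BDecomp b m e a r := by
    intro m hm
    have hm0 : m ≠ 0 := by omega
    have hpow : 0 < b ^ Nat.log b m := pow_pos (by omega) _
    refine ⟨Nat.log b m, m / b ^ Nat.log b m, m % b ^ Nat.log b m, ?_, ?_, ?_, ?_, ?_, ?_⟩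
    · exact (Nat.div_add_mod m (b ^ Nat.log b m)).symm
    · exact Nat.pow_log_le_self b hm0
    · exact Nat.lt_pow_succ_log_self hb1 m
    · exact (Nat.one_le_div_iff hpow).2 (Nat.pow_log_le_self b hm0)
    · rw [Nat.div_lt_iff_lt_mul hpow]
      have h := Nat.lt_pow_succ_log_self hb1 m
      rw [pow_succ] at h
      exact lt_of_lt_of_le h (le_of_eq (Nat.mul_comm _ _))
    · exact Nat.mod_lt _ hpow
  -- main simultaneous strong induction
  have main : ∀ n : ℕ, (∀ m, m < n → chg b c m < chg b c n) ∧
      (∀ e a r, BDecomp b n e a r →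
        BDecomp c (chg b c n) (chg b c e) (up a) (chg b c r)) ∧
      ((b ∣ n) ↔ c ∣ chg b c n) := by
    intro n
    induction n using Nat.strong_induction_on with
    | _ n IH =>
    by_cases hn : n < b
    · -- small case: n < b
      have hchgn : chg b c n = up n := hchg_small b c n hn
      refine ⟨?_, ?_, ?_⟩
      · intro m hm
        rw [hchgn, hchg_small b c m (lt_trans hm hn)]
        exact hupmono hm
      · rintro e a r ⟨heq, hle, hlt, ha0, hab, hr⟩
        have he0 : e = 0 := by
          by_contra h
          have h1 : 1 ≤ e := Nat.one_le_iff_ne_zero.2 h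
          have h2 : b ≤ b ^ e := by
            calc b = b ^ 1 := (pow_one b).symm
            _ ≤ b ^ e := Nat.pow_le_pow_right (by omega) h1
          omega
        subst he0
        simp only [pow_zero, one_mul] at heq hr
        have hr0 : r = 0 := by omega
        subst hr0
        have hna : n = a := by omega
        subst hna
        rw [hchgn, hchg0]
        refine ⟨by simp, by have := huppos n ha0; simp; omega, by simpa using hupltc n hab,
          huppos n ha0, hupltc n hab, by simp⟩
      · rw [hchgn]
        rcases Nat.eq_zero_or_pos n with h0 | h0
        · subst h0; simp [hup0]
        · constructor
          · intro hdvd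
            exact absurd (Nat.le_of_dvd h0 hdvd) (by omega)
          · intro hdvd
            have h1 : 0 < up n := huppos n h0
            have h2 : up n < c := hupltc n hn
            exact absurd (Nat.le_of_dvd h1 hdvd) (by omega)
    · -- big case: b ≤ n
      push_neg at hn
      have hEfact : ∀ e a r, BDecomp b n e a r → 1 ≤ e ∧ e < n ∧ 1 ≤ chg b c e := by
        rintro e a r ⟨heq, hle, hlt, ha0, hab, hr⟩
        have he1 : 1 ≤ e := by
          by_contra h
          have he0 : e = 0 := by omega
          subst he0
          have : n < b := by simpa using hlt
          omega
        have hen : e < n := by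
          have h1 : e < 2 ^ e := Nat.lt_two_pow_self (n := e)
          have h2 : 2 ^ e ≤ b ^ e := Nat.pow_le_pow_left hb2 e
          omega
        have h3 : chg b c 0 < chg b c e := (IH e hen).1 0 (by omega)
        rw [hchg0] at h3
        exact ⟨he1, hen, h3⟩
      have part2 : ∀ e a r, BDecomp b n e a r →
          BDecomp c (chg b c n) (chg b c e) (up a) (chg b c r) := by
        intro e a r hd
        obtain ⟨he1, hen, hce1⟩ := hEfact e a r hd
        obtain ⟨heq, hle, hlt, ha0, hab, hr⟩ := hd
        have hchgn : chg b c n = c ^ chg b c e * up a + chg b c r :=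
          hchg_big b c n e a r hn ⟨heq, hle, hlt, ha0, hab, hr⟩
        have hrn : r < n := by
          have h : b ^ e * 1 ≤ b ^ e * a := Nat.mul_le_mul_left _ ha0
          have hbe : 0 < b ^ e := pow_pos (by omega) _
          nlinarith
        have hchgr : chg b c r < c ^ chg b c e := by
          by_cases hrb : r < b
          · rw [hchg_small b c r hrb]
            calc up r < c := hupltc r hrb
            _ = c ^ 1 := (pow_one c).symm
            _ ≤ c ^ chg b c e := Nat.pow_le_pow_right (by omega) hce1
          · push_neg at hrb
            obtain ⟨e2, a2, r2, hd2⟩ := hdecomp_ex r hrb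
            have hD2 := (IH r hrn).2.1 e2 a2 r2 hd2
            have he2e : e2 < e := by
              have h1 : b ^ e2 ≤ r := hd2.2.1
              have h2 : b ^ e2 < b ^ e := lt_of_le_of_lt h1 hr
              exact (Nat.pow_lt_pow_iff_right hb1).1 h2
            have hc2e : chg b c e2 < chg b c e := (IH e hen).1 e2 he2e
            calc chg b c r < c ^ (chg b c e2 + 1) := hD2.2.2.1
            _ ≤ c ^ chg b c e := Nat.pow_le_pow_right (by omega) (by omega)
        have hua : up a < c := hupltc a hab
        have hua0 : 0 < up a := huppos a ha0
        refine ⟨hchgn, ?_, ?_, hua0, hua, hchgr⟩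
        · calc c ^ chg b c e = c ^ chg b c e * 1 := by ring
          _ ≤ c ^ chg b c e * up a := Nat.mul_le_mul_left _ hua0
          _ ≤ chg b c n := by rw [hchgn]; exact Nat.le_add_right _ _
        · calc chg b c n = c ^ chg b c e * up a + chg b c r := hchgn
          _ < c ^ chg b c e * up a + c ^ chg b c e := by omega
          _ = c ^ chg b c e * (up a + 1) := by ring
          _ ≤ c ^ chg b c e * c := Nat.mul_le_mul_left _ (by omega)
          _ = c ^ (chg b c e + 1) := by rw [pow_succ]
      obtain ⟨e, a, r, hd⟩ := hdecomp_ex n hn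
      obtain ⟨he1, hen, hce1⟩ := hEfact e a r hd
      have hDn := part2 e a r hd
      obtain ⟨heq, hle, hlt, ha0, hab, hrbe⟩ := hd
      have hchgn : chg b c n = c ^ chg b c e * up a + chg b c r := hDn.1
      have hrn : r < n := by
        have h : b ^ e * 1 ≤ b ^ e * a := Nat.mul_le_mul_left _ ha0
        have hbe : 0 < b ^ e := pow_pos (by omega) _
        nlinarith
      refine ⟨?_, part2, ?_⟩
      · intro m hm
        by_cases hmb : m < b
        · rw [hchg_small b c m hmb]
          calc up m < c := hupltc m hmb
          _ = c ^ 1 := (pow_one c).symm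
          _ ≤ c ^ chg b c e := Nat.pow_le_pow_right (by omega) hce1
          _ ≤ chg b c n := hDn.2.1
        · push_neg at hmb
          obtain ⟨e2, a2, r2, hd2⟩ := hdecomp_ex m hmb
          have hDm := (IH m hm).2.1 e2 a2 r2 hd2
          obtain ⟨heq2, hle2, hlt2, ha20, ha2b, hr2⟩ := hd2
          have he2le : e2 ≤ e := by
            have h1 : b ^ e2 ≤ n := le_trans hle2 (le_of_lt hm)
            have h2 : b ^ e2 < b ^ (e + 1) := lt_of_le_of_lt h1 hlt
            have h3 := (Nat.pow_lt_pow_iff_right hb1).1 h2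
            omega
          rcases lt_or_eq_of_le he2le with he2lt | he2eq
          · have hc2e : chg b c e2 < chg b c e := (IH e hen).1 e2 he2lt
            calc chg b c m < c ^ (chg b c e2 + 1) := hDm.2.2.1
            _ ≤ c ^ chg b c e := Nat.pow_le_pow_right (by omega) (by omega)
            _ ≤ chg b c n := hDn.2.1
          · subst he2eq
            have ha2a : a2 ≤ a := by
              by_contra h
              push_neg at h
              have h1 : b ^ e2 * (a + 1) ≤ b ^ e2 * a2 := Nat.mul_le_mul_left _ h
              have h2 : b ^ e2 * (a + 1) = b ^ e2 * a + b ^ e2 := by ring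
              have h3 : b ^ e2 * a2 ≤ m := by rw [heq2]; exact Nat.le_add_right _ _
              linarith
            have hchgm : chg b c m = c ^ chg b c e2 * up a2 + chg b c r2 := hDm.1
            rcases lt_or_eq_of_le ha2a with ha2lt | ha2eq
            · have h1 : chg b c r2 < c ^ chg b c e2 := hDm.2.2.2.2.2
              have h2 : up a2 + 1 ≤ up a := hupmono ha2lt
              have h3 : c ^ chg b c e2 * (up a2 + 1) ≤ c ^ chg b c e2 * up a :=
                Nat.mul_le_mul_left _ h2
              have h4 : c ^ chg b c e2 * (up a2 + 1)
                  = c ^ chg b c e2 * up a2 + c ^ chg b c e2 := by ring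
              have h5 : c ^ chg b c e2 * up a ≤ chg b c n := by
                rw [hchgn]; exact Nat.le_add_right _ _
              linarith [hchgm ▸ le_refl (chg b c m)]
            · subst ha2eq
              have hr2r : r2 < r := by
                have h1 : m = b ^ e2 * a2 + r2 := heq2
                have h2 : n = b ^ e2 * a2 + r := heq
                omega
              have h3 : chg b c r2 < chg b c r := (IH r hrn).1 r2 hr2r
              rw [hchgm, hchgn]
              exact Nat.add_lt_add_left h3 _
      · have hdvd1 : b ∣ n ↔ b ∣ r := by
          have hbe : b ∣ b ^ e * a := Dvd.dvd.mul_right (dvd_pow_self b (by omega)) a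
          rw [heq]
          exact Nat.dvd_add_right hbe
        have hdvd2 : c ∣ chg b c n ↔ c ∣ chg b c r := by
          have hce : c ∣ c ^ chg b c e * up a :=
            Dvd.dvd.mul_right (dvd_pow_self c (by omega)) (up a)
          rw [hchgn]
          exact Nat.dvd_add_right hce
        rw [hdvd1, hdvd2]
        exact (IH r hrn).2.2
  exact ⟨(main n).2.2, (main n).2.1⟩
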